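/- Let G be a group generated by a finite set S, with word metric d_S, acting by isometries on a proper metric space (X,d). Fix a basepoint x₀ ∈ X and let π : G → X be the orbit map π(g) = g·x₀. Let H ⊆ G be a subset such that π restricted to H is proper (for every bounded set W ⊆ X, the set {h ∈ H : π(h) ∈ W} is finite), and suppose the action of G on X is acylindrical along π(H). Then for every x ∈ H and every r ≥ 0 there exists R ≥ 0 such that for every D ≥ 0 there exists B ≥ 0, not depending on y, such that for every y ∈ H with d(π(x), π(y)) ≥ R one has N_D(π⁻¹(B_r(π(x)))) ∩ π⁻¹(B_r(π(y))) ⊆ N_B(H), where the neighbourhoods N_D and N_B are taken with respect to d_S and B_r(·) denotes the closed ball of radius r in X. -/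

import Mathlib

/-- The word metric on a group `G` with respect to a generating set `Y`:
`wordDist Y g h` is the least length of a word in `Y ∪ Y⁻¹` representing `g⁻¹ * h`. -/
noncomputable def wordDist {G : Type*} [Group G] (Y : Set G) (g h : G) : ℕ :=
  sInf {n : ℕ | ∃ w : List G, w.length = n ∧ (∀ t ∈ w, t ∈ Y ∪ Y⁻¹) ∧ w.prod = g⁻¹ * h}

/-- Any two elements are joined by a word of length exactly `wordDist`. -/
lemma wordDist_exists_word {G : Type*} [Group G] (S : Finset G)
    (hS : Subgroup.closure (S : Set G) = ⊤) (g h : G) :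
    ∃ w : List G, (∀ t ∈ w, t ∈ (S : Set G) ∪ (S : Set G)⁻¹) ∧ w.prod = g⁻¹ * h ∧
      w.length = wordDist (S : Set G) g h := by
  have hmem : g⁻¹ * h ∈ Submonoid.closure ((S : Set G) ∪ (S : Set G)⁻¹) := by
    have h1 : g⁻¹ * h ∈ (Subgroup.closure (S : Set G)).toSubmonoid := by
      rw [hS]; trivial
    rwa [Subgroup.closure_toSubmonoid] at h1
  obtain ⟨l, hl, hlp⟩ := Submonoid.exists_list_of_mem_closure hmem
  have hne : {n : ℕ | ∃ w : List G, w.length = n ∧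
      (∀ t ∈ w, t ∈ (S : Set G) ∪ (S : Set G)⁻¹) ∧ w.prod = g⁻¹ * h}.Nonempty :=
    ⟨l.length, l, rfl, hl, hlp⟩
  obtain ⟨w, hw1, hw2, hw3⟩ := Nat.sInf_mem hne
  exact ⟨w, hw2, hw3, hw1⟩

/-- Products of at most `n` elements of `T`. -/
def genBall {G : Type*} [Group G] (T : Set G) : ℕ → Set G
  | 0 => {1}
  | (n + 1) => {1} ∪ (fun p : G × G => p.1 * p.2) '' (T ×ˢ genBall T n)

lemma genBall_finite {G : Type*} [Group G] {T : Set G} (hT : T.Finite) :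
    ∀ n, (genBall T n).Finite
  | 0 => Set.finite_singleton 1
  | (n + 1) => (Set.finite_singleton 1).union ((hT.prod (genBall_finite hT n)).image _)

lemma prod_mem_genBall {G : Type*} [Group G] {T : Set G} :
    ∀ (n : ℕ) (w : List G), (∀ t ∈ w, t ∈ T) → w.length ≤ n → w.prod ∈ genBall T n
  | 0, [], _, _ => by simp [genBall]
  | 0, (t :: w), _, h => by simp at h
  | (n + 1), [], _, _ => by simp [genBall]
  | (n + 1), (t :: w), hmem, hlen => by
      have hw : w.prod ∈ genBall T n :=
        prod_mem_genBall n w (fun s hs => hmem s (List.mem_cons_of_mem _ hs))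
          (Nat.succ_le_succ_iff.mp (by simpa using hlen))
      exact Or.inr ⟨(t, w.prod), ⟨hmem t List.mem_cons_self, hw⟩, by simp⟩

lemma genBall_disp {G X : Type*} [Group G] [MetricSpace X] [MulAction G X]
    (hiso : ∀ (g : G) (x y : X), dist (g • x) (g • y) = dist x y)
    (x₀ : X) {T : Set G} {lam : ℝ} (hlam0 : 0 ≤ lam)
    (hlam : ∀ t ∈ T, dist (t • x₀) x₀ ≤ lam) :
    ∀ (n : ℕ), ∀ u ∈ genBall T n, dist (u • x₀) x₀ ≤ n * lam
  | 0 => fun u hu => by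
      simp only [genBall, Set.mem_singleton_iff] at hu
      subst hu; simp
  | (n + 1) => fun u hu => by
      rcases hu with hu | ⟨⟨t, v⟩, ⟨ht, hv⟩, rfl⟩
      · simp only [Set.mem_singleton_iff] at hu
        subst hu
        simp only [one_smul, dist_self]
        have : (0:ℝ) ≤ ((n:ℝ)+1) * lam := mul_nonneg (by positivity) hlam0
        push_cast
        linarith
      · have h1 := genBall_disp hiso x₀ hlam0 hlam n v hv
        have h2 := hlam t ht
        calc dist ((t * v) • x₀) x₀
            ≤ dist ((t * v) • x₀) (t • x₀) + dist (t • x₀) x₀ := dist_triangle _ _ _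
          _ = dist (v • x₀) x₀ + dist (t • x₀) x₀ := by rw [mul_smul, hiso]
          _ ≤ n * lam + lam := add_le_add h1 h2
          _ = (↑(n + 1)) * lam := by push_cast; ring

/-- a finitely generated group `G` acts by isometries on a proper metric space
`X`, `H ⊆ G` is such that the orbit map is proper on `H` and the action is acylindrical
along `π(H)`. Then for every `x ∈ H` and `r ≥ 0` there is `R ≥ 0` such that for every
`D ≥ 0` there is `B ≥ 0` (independent of `y`) with
`N_D(π⁻¹(B_r(π x))) ∩ π⁻¹(B_r(π y)) ⊆ N_B(H)` whenever `y ∈ H` and `d(π x, π y) ≥ R`. -/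
theorem fibre_intersection_near_H
    {G X : Type*} [Group G] [MetricSpace X] [ProperSpace X] [MulAction G X]
    (hiso : ∀ (g : G) (x y : X), dist (g • x) (g • y) = dist x y)
    (S : Finset G) (hS : Subgroup.closure (S : Set G) = ⊤)
    (x₀ : X) (H : Set G)
    (hproper : ∀ W : Set X, Bornology.IsBounded W → {h : G | h ∈ H ∧ h • x₀ ∈ W}.Finite)
    (hacyl : ∀ r : ℝ, 0 ≤ r → ∃ R : ℝ, 0 ≤ R ∧
      ∀ x ∈ (fun g : G => g • x₀) '' H, ∀ y ∈ (fun g : G => g • x₀) '' H, R ≤ dist x y →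
        {g : G | dist x (g • x) ≤ r ∧ dist y (g • y) ≤ r}.Finite) :
    ∀ x ∈ H, ∀ r : ℝ, 0 ≤ r → ∃ R : ℝ, 0 ≤ R ∧ ∀ D : ℝ, 0 ≤ D → ∃ B : ℝ, 0 ≤ B ∧
      ∀ y ∈ H, R ≤ dist (x • x₀) (y • x₀) →
        ∀ g : G,
          (∃ p : G, dist (p • x₀) (x • x₀) ≤ r ∧ (wordDist (S : Set G) g p : ℝ) ≤ D) →
          dist (g • x₀) (y • x₀) ≤ r →
          ∃ h ∈ H, (wordDist (S : Set G) g h : ℝ) ≤ B := by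
  intro x hx r hr
  obtain ⟨R, hR0, hRacyl⟩ := hacyl (2 * r) (by linarith)
  refine ⟨R, hR0, ?_⟩
  intro D hD
  -- a helper for moving basepoints
  have hmove : ∀ (a : G) (z w : X), dist (a • z) w = dist z (a⁻¹ • w) := by
    intro a z w
    conv_lhs => rw [show w = a • (a⁻¹ • w) from (smul_inv_smul a w).symm]
    exact hiso a z (a⁻¹ • w)
  -- the finite alphabet and the displacement constant
  set T : Set G := (S : Set G) ∪ (S : Set G)⁻¹ with hTdef
  have hTfin : T.Finite := S.finite_toSet.union S.finite_toSet.inv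
  have hEfin : (insert (0:ℝ) ((fun t => dist (t • x₀) x₀) '' T)).Finite :=
    (hTfin.image _).insert 0
  set lam : ℝ := sSup (insert (0:ℝ) ((fun t => dist (t • x₀) x₀) '' T)) with hlamdef
  have hlam0 : 0 ≤ lam := le_csSup hEfin.bddAbove (Set.mem_insert _ _)
  have hlam : ∀ t ∈ T, dist (t • x₀) x₀ ≤ lam := fun t ht =>
    le_csSup hEfin.bddAbove (Set.mem_insert_of_mem _ ⟨t, ht, rfl⟩)
  set N : ℕ := ⌊D⌋₊ with hNdef
  -- the set of relevant pairs (g, y)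
  set P : Set (G × G) := {q : G × G | q.2 ∈ H ∧ R ≤ dist (x • x₀) (q.2 • x₀) ∧
      dist (q.1 • x₀) (q.2 • x₀) ≤ r ∧
      ∃ u ∈ genBall T N, dist ((q.1 * u) • x₀) (x • x₀) ≤ r} with hPdef
  -- finiteness of the per-(y,u) sets, via acylindricity
  have hGyufin : ∀ y ∈ H, R ≤ dist (x • x₀) (y • x₀) → ∀ u : G,
      {g : G | dist (g • x₀) (y • x₀) ≤ r ∧ dist ((g * u) • x₀) (x • x₀) ≤ r}.Finite := by
    intro y hy hRy u
    by_cases hne : {g : G | dist (g • x₀) (y • x₀) ≤ r ∧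
        dist ((g * u) • x₀) (x • x₀) ≤ r}.Nonempty
    · obtain ⟨g₀, hg₀1, hg₀2⟩ := hne
      have hF : {a : G | dist (x • x₀) (a • (x • x₀)) ≤ 2 * r ∧
          dist (y • x₀) (a • (y • x₀)) ≤ 2 * r}.Finite :=
        hRacyl (x • x₀) ⟨x, hx, rfl⟩ (y • x₀) ⟨y, hy, rfl⟩ hRy
      refine Set.Finite.subset (hF.image (fun a => a * g₀)) ?_
      rintro g ⟨hg1, hg2⟩
      refine ⟨g * g₀⁻¹, ⟨?_, ?_⟩, by group⟩
      · have e1 : dist ((g * u) • x₀) ((g * g₀⁻¹) • (x • x₀)) =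
            dist ((g₀ * u) • x₀) (x • x₀) := by
          rw [hmove (g * u), hmove (g₀ * u), ← mul_smul, ← mul_smul,
            show (g * u)⁻¹ * (g * g₀⁻¹) = (g₀ * u)⁻¹ * 1 by group, mul_one, mul_smul]
        calc dist (x • x₀) ((g * g₀⁻¹) • (x • x₀))
            ≤ dist (x • x₀) ((g * u) • x₀) + dist ((g * u) • x₀) ((g * g₀⁻¹) • (x • x₀)) :=
              dist_triangle _ _ _
          _ = dist (x • x₀) ((g * u) • x₀) + dist ((g₀ * u) • x₀) (x • x₀) := by rw [e1]
          _ ≤ r + r := add_le_add (by rw [dist_comm]; exact hg2) hg₀2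
          _ = 2 * r := by ring
      · have e2 : dist (g • x₀) ((g * g₀⁻¹) • (y • x₀)) = dist (g₀ • x₀) (y • x₀) := by
          rw [hmove g, hmove g₀, ← mul_smul, ← mul_smul,
            show g⁻¹ * (g * g₀⁻¹) = g₀⁻¹ * 1 by group, mul_one, mul_smul]
        calc dist (y • x₀) ((g * g₀⁻¹) • (y • x₀))
            ≤ dist (y • x₀) (g • x₀) + dist (g • x₀) ((g * g₀⁻¹) • (y • x₀)) :=
              dist_triangle _ _ _
          _ = dist (y • x₀) (g • x₀) + dist (g₀ • x₀) (y • x₀) := by rw [e2]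
          _ ≤ r + r := add_le_add (by rw [dist_comm]; exact hg1) hg₀1
          _ = 2 * r := by ring
    · rw [Set.not_nonempty_iff_eq_empty] at hne
      rw [hne]
      exact Set.finite_empty
  -- the finite set of relevant y's
  have hYfin : {h : G | h ∈ H ∧ h • x₀ ∈ Metric.closedBall (x • x₀) (2 * r + N * lam)}.Finite :=
    hproper _ Metric.isBounded_closedBall
  have hY'fin : {h : G | h ∈ H ∧ R ≤ dist (x • x₀) (h • x₀) ∧
      h • x₀ ∈ Metric.closedBall (x • x₀) (2 * r + N * lam)}.Finite :=
    hYfin.subset (fun h ⟨h1, _, h3⟩ => ⟨h1, h3⟩)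
  -- P is finite
  have hPfin : P.Finite := by
    have hcover : P ⊆ ⋃ u ∈ genBall T N,
        ⋃ y ∈ {h : G | h ∈ H ∧ R ≤ dist (x • x₀) (h • x₀) ∧
          h • x₀ ∈ Metric.closedBall (x • x₀) (2 * r + N * lam)},
        ({g : G | dist (g • x₀) (y • x₀) ≤ r ∧ dist ((g * u) • x₀) (x • x₀) ≤ r} ×ˢ ({y} : Set G)) := by
      rintro ⟨g, y⟩ ⟨hyH, hyR, hgy, u, hu, hgu⟩
      have hdisp : dist (g • x₀) ((g * u) • x₀) = dist (u • x₀) x₀ := by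
        rw [mul_smul, hiso g, dist_comm]
      have hball : y • x₀ ∈ Metric.closedBall (x • x₀) (2 * r + N * lam) := by
        rw [Metric.mem_closedBall]
        have hNu : dist (u • x₀) x₀ ≤ N * lam := genBall_disp hiso x₀ hlam0 hlam N u hu
        calc dist (y • x₀) (x • x₀)
            ≤ dist (y • x₀) (g • x₀) + dist (g • x₀) ((g * u) • x₀) +
              dist ((g * u) • x₀) (x • x₀) := dist_triangle4 _ _ _ _
          _ ≤ r + N * lam + r := by
              refine add_le_add (add_le_add (by rw [dist_comm]; exact hgy) ?_) hgu
              rw [hdisp]; exact hNu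
          _ ≤ 2 * r + N * lam := by linarith
      exact Set.mem_biUnion hu (Set.mem_biUnion ⟨hyH, hyR, hball⟩ ⟨⟨hgy, hgu⟩, rfl⟩)
    exact Set.Finite.subset
      (Set.Finite.biUnion (genBall_finite hTfin N) (fun u _ =>
        Set.Finite.biUnion hY'fin (fun y hy =>
          ((hGyufin y hy.1 hy.2.1 u).prod (Set.finite_singleton y)))))
      hcover
  -- the bound B
  obtain ⟨b, hb⟩ := (hPfin.image (fun q : G × G => (wordDist (S : Set G) q.1 q.2 : ℝ))).bddAbove
  refine ⟨max b 0, le_max_right _ _, ?_⟩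
  rintro y hy hRy g ⟨p, hpx, hgp⟩ hgy
  obtain ⟨w, hwmem, hwprod, hwlen⟩ := wordDist_exists_word S hS g p
  have hlen : w.length ≤ N := Nat.le_floor (by rw [hwlen]; exact hgp)
  have hu : w.prod ∈ genBall T N := prod_mem_genBall N w hwmem hlen
  have hgweq : g * w.prod = p := by rw [hwprod]; group
  have hmemP : (g, y) ∈ P := ⟨hy, hRy, hgy, w.prod, hu, by rw [hgweq]; exact hpx⟩
  refine ⟨y, hy, le_trans (hb ⟨(g, y), hmemP, rfl⟩) (le_max_left _ _)⟩
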